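/- If λ = (λ_1, …, λ_m) is a sequence of vectors in ℤ² (m ≥ 5, indices cyclic) such that every pair of cyclically adjacent columns has determinant ±1 (the non-singularity condition for the convex m-gon), then there exist indices i < j with F_i and F_j non-adjacent (i.e. j ≠ i+1 and (i,j) ≠ (1,m)) such that det(λ_i, λ_j) = ±1. -/

import Mathlib

open Fin.NatCast

private def Dt (x y : Fin 2 → ℤ) : ℤ := x 0 * y 1 - x 1 * y 0

private def sg (m : ℕ) [NeZero m] (lam : Fin m → Fin 2 → ℤ) : ℕ → ℤ
  | 0 => 1
  | k+1 => sg m lam k * Dt (lam (k : Fin m)) (lam ((k+1 : ℕ) : Fin m))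

private def LL (m : ℕ) [NeZero m] (lam : Fin m → Fin 2 → ℤ) (k : ℕ) : Fin 2 → ℤ :=
  fun j => sg m lam k * lam ((k : ℕ) : Fin m) j

private theorem pluecker (x u v w : Fin 2 → ℤ) :
    Dt u v * Dt x w - Dt u w * Dt x v + Dt v w * Dt x u = 0 := by
  simp only [Dt]; ring

/-- Every characteristic matrix on the convex `m`-gon (`m ≥ 5`) is decomposable:
there exist two non-(cyclically-)adjacent columns whose determinant is `±1`. -/
theorem stmt_1 (m : ℕ) [NeZero m] (hm : 5 ≤ m) (lam : Fin m → Fin 2 → ℤ)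
    (hadj : ∀ i : Fin m,
      lam i 0 * lam (i + 1) 1 - lam i 1 * lam (i + 1) 0 = 1 ∨
      lam i 0 * lam (i + 1) 1 - lam i 1 * lam (i + 1) 0 = -1) :
    ∃ i j : Fin m, i ≠ j ∧ j ≠ i + 1 ∧ i ≠ j + 1 ∧
      (lam i 0 * lam j 1 - lam i 1 * lam j 0 = 1 ∨
       lam i 0 * lam j 1 - lam i 1 * lam j 0 = -1) := by
  have hadj' : ∀ k : ℕ, Dt (lam (k : Fin m)) (lam ((k+1 : ℕ) : Fin m)) = 1 ∨
      Dt (lam (k : Fin m)) (lam ((k+1 : ℕ) : Fin m)) = -1 := by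
    intro k
    have h := hadj (k : Fin m)
    have e : ((k+1 : ℕ) : Fin m) = (k : Fin m) + 1 := by push_cast; ring
    rw [e]
    exact h
  have hs : ∀ k : ℕ, sg m lam k = 1 ∨ sg m lam k = -1 := by
    intro k
    induction k with
    | zero => left; rfl
    | succ n ih =>
      have hsg : sg m lam (n+1)
          = sg m lam n * Dt (lam (n : Fin m)) (lam ((n+1 : ℕ) : Fin m)) := rfl
      rw [hsg]
      rcases ih with h1 | h1 <;> rcases hadj' n with h2 | h2 <;> rw [h1, h2] <;> norm_num
  have hscale : ∀ p q : ℕ, Dt (LL m lam p) (LL m lam q)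
      = sg m lam p * sg m lam q * Dt (lam (p : Fin m)) (lam (q : Fin m)) := by
    intro p q; simp only [LL, Dt]; ring
  have hone : ∀ a : ℕ, Dt (LL m lam a) (LL m lam (a+1)) = 1 := by
    intro a
    rw [hscale]
    have hsg : sg m lam (a+1)
        = sg m lam a * Dt (lam (a : Fin m)) (lam ((a+1 : ℕ) : Fin m)) := rfl
    rw [hsg]
    rcases hs a with h1 | h1 <;> rcases hadj' a with h2 | h2 <;> rw [h1, h2] <;> norm_num
  have hone' : ∀ a b : ℕ, b = a + 1 → Dt (LL m lam a) (LL m lam b) = 1 := by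
    intro a b hb; subst hb; exact hone a
  have hval : ∀ p q : ℕ,
      (Dt (LL m lam p) (LL m lam q) = 1 ∨ Dt (LL m lam p) (LL m lam q) = -1) →
      (Dt (lam (p : Fin m)) (lam (q : Fin m)) = 1 ∨
       Dt (lam (p : Fin m)) (lam (q : Fin m)) = -1) := by
    intro p q h
    rw [hscale p q] at h
    rcases hs p with h1 | h1 <;> rcases hs q with h2 | h2 <;> rw [h1, h2] at h <;> omega
  have hcast : ∀ a b : ℕ, a ≤ b → ((a : Fin m) = (b : Fin m)) → m ∣ b - a := by
    intro a b hab h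
    have hv := congrArg Fin.val h
    rw [Fin.val_natCast, Fin.val_natCast] at hv
    exact (Nat.modEq_iff_dvd' hab).mp hv
  have main : ∀ (p c : ℕ), 2 ≤ c → c + 1 < m →
      (Dt (LL m lam p) (LL m lam (p + c)) = 1 ∨ Dt (LL m lam p) (LL m lam (p + c)) = -1) →
      ∃ i j : Fin m, i ≠ j ∧ j ≠ i + 1 ∧ i ≠ j + 1 ∧
        (lam i 0 * lam j 1 - lam i 1 * lam j 0 = 1 ∨
         lam i 0 * lam j 1 - lam i 1 * lam j 0 = -1) := by
    intro p c hc hcm h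
    refine ⟨(p : Fin m), ((p + c : ℕ) : Fin m), ?_, ?_, ?_, hval p (p + c) h⟩
    · intro he
      have hd := hcast p (p + c) (by omega) he
      rw [show p + c - p = c by omega] at hd
      exact absurd (Nat.le_of_dvd (by omega) hd) (by omega)
    · intro he
      have e1 : ((p + 1 : ℕ) : Fin m) = (p : Fin m) + 1 := by push_cast; ring
      have hd := hcast (p + 1) (p + c) (by omega) (by rw [e1, ← he])
      rw [show p + c - (p + 1) = c - 1 by omega] at hd
      exact absurd (Nat.le_of_dvd (by omega) hd) (by omega)
    · intro he
      have e2 : ((p + c + 1 : ℕ) : Fin m) = ((p + c : ℕ) : Fin m) + 1 := by push_cast; ring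
      have hd := hcast p (p + c + 1) (by omega) (by rw [e2, ← he])
      rw [show p + c + 1 - p = c + 1 by omega] at hd
      exact absurd (Nat.le_of_dvd (by omega) hd) (by omega)
  have hzero : ∀ p : ℕ,
      Dt (LL m lam (p+1)) (LL m lam (p+3)) * Dt (LL m lam p) (LL m lam (p+2)) = 0 →
      Dt (LL m lam p) (LL m lam (p+3)) = -1 := by
    intro p h0
    have hp := pluecker (LL m lam p) (LL m lam (p+1)) (LL m lam (p+2)) (LL m lam (p+3))
    rw [hone' (p+1) (p+2) (by omega), hone' (p+2) (p+3) (by omega),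
      hone' p (p+1) (by omega), h0] at hp
    linarith
  by_cases hsmall : ∃ k : ℕ, Dt (LL m lam k) (LL m lam (k+2)) = -1 ∨
      Dt (LL m lam k) (LL m lam (k+2)) = 0 ∨ Dt (LL m lam k) (LL m lam (k+2)) = 1
  · obtain ⟨k, hk⟩ := hsmall
    rcases hk with h | h | h
    · exact main k 2 (by omega) (by omega) (Or.inr h)
    · exact main k 3 (by omega) (by omega) (Or.inr (hzero k (mul_eq_zero_of_right _ h)))
    · exact main k 2 (by omega) (by omega) (Or.inl h)
  · push_neg at hsmall
    exfalso
    have hbig : ∀ k : ℕ, 2 ≤ (Dt (LL m lam k) (LL m lam (k+2))).natAbs := by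
      intro k
      obtain ⟨h1, h2, h3⟩ := hsmall k
      omega
    have hgrow : ∀ k : ℕ, k + 1 ≤ m →
        (Dt (LL m lam 0) (LL m lam k)).natAbs < (Dt (LL m lam 0) (LL m lam (k+1))).natAbs := by
      intro k
      induction k with
      | zero =>
        intro _
        have h00 : Dt (LL m lam 0) (LL m lam 0) = 0 := by simp only [Dt]; ring
        rw [h00, hone' 0 (0+1) rfl]
        simp
      | succ n ih =>
        intro h
        have ih' := ih (by omega)
        have hp := pluecker (LL m lam 0) (LL m lam n) (LL m lam (n+1)) (LL m lam (n+2))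
        rw [hone' n (n+1) rfl, hone' (n+1) (n+2) (by omega)] at hp
        have h2 : 2 * (Dt (LL m lam 0) (LL m lam (n+1))).natAbs
            ≤ (Dt (LL m lam n) (LL m lam (n+2)) * Dt (LL m lam 0) (LL m lam (n+1))).natAbs := by
          rw [Int.natAbs_mul]
          exact mul_le_mul_left (hbig n) _
        rw [show n + 1 + 1 = n + 2 from rfl]
        omega
    have hfin : ((m : ℕ) : Fin m) = 0 := Fin.natCast_self m
    have hdm : Dt (LL m lam 0) (LL m lam m) = 0 := by
      rw [hscale, hfin, Nat.cast_zero]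
      simp only [Dt]
      ring
    have hlast := hgrow (m - 1) (by omega)
    rw [show m - 1 + 1 = m by omega, hdm] at hlast
    simp at hlast
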